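/- The automorphism group of the zero-divisor graph Γ(Z_n) is isomorphic to the direct product over all proper divisors d of n of the symmetric groups on φ(n/d) letters. -/

import Mathlib

/-- The nonzero zero-divisors of `ZMod n`, the vertex set of the zero-divisor graph. -/
abbrev Zdv (n : ℕ) : Type := {x : ZMod n // x ≠ 0 ∧ ∃ y : ZMod n, y ≠ 0 ∧ x * y = 0}

/-- The zero-divisor graph of `ZMod n`: distinct nonzero zero-divisors `x, y` adjacent iff `x*y = 0`. -/
def zdg (n : ℕ) : SimpleGraph (Zdv n) :=
  SimpleGraph.fromRel (fun x y => x.1 * y.1 = 0)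

/-- gcd label of a vertex. -/
def gv (n : ℕ) (x : Zdv n) : ℕ := Nat.gcd (x.1.val) n

lemma zmul_eq_zero_iff (n : ℕ) (h : 1 < n) (x y : ZMod n) :
    x * y = 0 ↔ n ∣ x.val * y.val := by
  haveI : NeZero n := ⟨by omega⟩
  rw [← ZMod.val_eq_zero, ZMod.val_mul, Nat.dvd_iff_mod_eq_zero]

lemma dvd_mul_iff_gcd (n a b : ℕ) : n ∣ a * b ↔ n ∣ Nat.gcd a n * Nat.gcd b n := by
  constructor
  · intro h
    have key : Nat.gcd a n * Nat.gcd b n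
        = Nat.gcd (Nat.gcd (a*b) (a*n)) (Nat.gcd (n*b) (n*n)) := by
      rw [← Nat.gcd_mul_right, Nat.gcd_mul_left, Nat.gcd_mul_left]
    rw [key]
    exact Nat.dvd_gcd (Nat.dvd_gcd h ⟨a, Nat.mul_comm _ _⟩) (Nat.dvd_gcd ⟨b, rfl⟩ ⟨n, rfl⟩)
  · intro h
    exact h.trans (mul_dvd_mul (Nat.gcd_dvd_left a n) (Nat.gcd_dvd_left b n))

lemma adj_iff (n : ℕ) (h : 1 < n) (x y : Zdv n) :
    (zdg n).Adj x y ↔ x ≠ y ∧ n ∣ gv n x * gv n y := by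
  rw [zdg, SimpleGraph.fromRel_adj]
  constructor
  · rintro ⟨hne, hxy | hyx⟩
    · exact ⟨hne, (dvd_mul_iff_gcd n _ _).1 ((zmul_eq_zero_iff n h _ _).1 hxy)⟩
    · refine ⟨hne, (dvd_mul_iff_gcd n _ _).1 ?_⟩
      rw [Nat.mul_comm]
      exact (zmul_eq_zero_iff n h _ _).1 hyx
  · rintro ⟨hne, hd⟩
    exact ⟨hne, Or.inl ((zmul_eq_zero_iff n h _ _).2 ((dvd_mul_iff_gcd n _ _).2 hd))⟩

lemma gv_dvd (n : ℕ) (x : Zdv n) : gv n x ∣ n := Nat.gcd_dvd_right _ _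

lemma gv_lt (n : ℕ) (h : 1 < n) (x : Zdv n) : gv n x < n := by
  haveI : NeZero n := ⟨by omega⟩
  have hv : x.1.val ≠ 0 := fun hv => x.2.1 ((ZMod.val_eq_zero _).1 hv)
  have h1 : gv n x ≤ x.1.val := Nat.le_of_dvd (Nat.pos_of_ne_zero hv) (Nat.gcd_dvd_left _ _)
  exact lt_of_le_of_lt h1 (ZMod.val_lt _)

lemma gv_gt_one (n : ℕ) (h : 1 < n) (x : Zdv n) : 1 < gv n x := by
  haveI : NeZero n := ⟨by omega⟩
  rcases Nat.lt_or_ge 1 (gv n x) with h' | h'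
  · exact h'
  · exfalso
    have hpos : 0 < gv n x := Nat.gcd_pos_of_pos_right _ (by omega)
    have h1 : gv n x = 1 := by omega
    have hu : IsUnit x.1 := by
      have : IsUnit ((x.1.val : ℕ) : ZMod n) := (ZMod.isUnit_iff_coprime _ _).2 h1
      rwa [ZMod.natCast_val, ZMod.cast_id] at this
    obtain ⟨y, hy0, hxy⟩ := x.2.2
    exact hy0 ((hu.mul_right_eq_zero).1 hxy)

lemma cast_ne_zero' (n a : ℕ) (h1 : 1 < n) (ha : 0 < a) (ha2 : a < n) : (a : ZMod n) ≠ 0 := by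
  haveI : NeZero n := ⟨by omega⟩
  rw [Ne, ZMod.natCast_eq_zero_iff]
  intro h
  exact absurd (Nat.le_of_dvd ha h) (by omega)

lemma mem_zdv (n a d : ℕ) (h1 : 1 < n) (hd : d ∣ n) (h2 : 1 < d) (h3 : d < n)
    (hda : d ∣ a) (ha0 : 0 < a) (ha : a < n) :
    (a : ZMod n) ≠ 0 ∧ ∃ y : ZMod n, y ≠ 0 ∧ (a : ZMod n) * y = 0 := by
  have hnd0 : 0 < n / d := Nat.div_pos (le_of_lt h3) (by omega)
  have hndn : n / d < n := Nat.div_lt_self (by omega) h2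
  refine ⟨cast_ne_zero' n a h1 ha0 ha, ((n / d : ℕ) : ZMod n), cast_ne_zero' n _ h1 hnd0 hndn, ?_⟩
  haveI : NeZero n := ⟨by omega⟩
  rw [← Nat.cast_mul, ZMod.natCast_eq_zero_iff]
  exact Dvd.dvd.trans (by rw [Nat.mul_div_cancel' hd]) (Nat.mul_dvd_mul_right hda _)

lemma gv_mk (n a : ℕ) (h1 : 1 < n) (ha : a < n) (hmem : _) :
    gv n ⟨(a : ZMod n), hmem⟩ = Nat.gcd a n := by
  haveI : NeZero n := ⟨by omega⟩
  simp only [gv, ZMod.val_natCast, Nat.mod_eq_of_lt ha]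

lemma gcd_sub_self (n d : ℕ) (hd : d ∣ n) (hdn : d ≤ n) : Nat.gcd (n - d) n = d := by
  refine Nat.dvd_antisymm ?_ (Nat.dvd_gcd (Nat.dvd_sub hd dvd_rfl) hd)
  have h1 : Nat.gcd (n - d) n ∣ n - (n - d) :=
    Nat.dvd_sub (Nat.gcd_dvd_right _ _) (Nat.gcd_dvd_left _ _)
  rwa [Nat.sub_sub_self hdn] at h1

noncomputable def totEquiv (m : ℕ) : {b : ℕ // b < m ∧ Nat.Coprime b m} ≃ Fin m.totient :=
  (Equiv.subtypeEquivRight (fun b => by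
    simp [Finset.mem_filter, Finset.mem_range, Nat.coprime_comm, and_comm])).trans
    (Finset.equivFinOfCardEq (rfl : ((Finset.range m).filter m.Coprime).card = m.totient))

lemma gcd_mul_cop (d m b : ℕ) (hb : Nat.Coprime b m) : Nat.gcd (d * b) (d * m) = d := by
  rw [Nat.gcd_mul_left, Nat.Coprime.gcd_eq_one hb, Nat.mul_one]

lemma dmul_lt (n d b : ℕ) (hd : d ∣ n) (hb : b < n / d) : d * b < n := by
  have h2' : b + 1 ≤ n / d := hb
  have h := Nat.mul_le_mul_left d h2'
  rw [Nat.mul_div_cancel' hd, Nat.mul_add, Nat.mul_one] at h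
  have hd0 : 0 < d := by
    rcases Nat.eq_zero_or_pos d with h0 | h0
    · subst h0; simp at hb
    · exact h0
  omega

noncomputable def fiberEquiv (n d : ℕ) (h1 : 1 < n) (hd : d ∣ n) (h2 : 1 < d) (h3 : d < n) :
    {x : Zdv n // gv n x = d} ≃ Fin ((n / d).totient) := by
  haveI : NeZero n := ⟨by omega⟩
  refine Equiv.trans ?_ (totEquiv (n / d))
  have hd0 : 0 < d := by omega
  have hnd1 : 1 < n / d := by
    refine (Nat.lt_div_iff_mul_lt' hd _).2 ?_
    omega
  refine
  { toFun := fun x => ⟨x.1.1.val / d, ?_, ?_⟩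
    invFun := fun b => ⟨⟨((d * b.1 : ℕ) : ZMod n), ?_⟩, ?_⟩
    left_inv := ?_
    right_inv := ?_ }
  · exact Nat.div_lt_div_of_lt_of_dvd hd (ZMod.val_lt _)
  · have hx : Nat.gcd (x.1.1.val) n = d := x.2
    have := Nat.coprime_div_gcd_div_gcd (m := x.1.1.val) (n := n) (by rw [hx]; omega)
    rwa [hx] at this
  · have hb0 : 0 < b.1 := by
      rcases Nat.eq_zero_or_pos b.1 with h | h
      · exfalso
        have hc := b.2.2
        rw [h, Nat.coprime_zero_left] at hc
        omega
      · exact h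
    exact mem_zdv n (d*b.1) d h1 hd h2 h3 ⟨b.1, rfl⟩ (by positivity) (dmul_lt n d b.1 hd b.2.1)
  · show Nat.gcd (((d * b.1 : ℕ) : ZMod n)).val n = d
    rw [ZMod.val_natCast, Nat.mod_eq_of_lt (dmul_lt n d b.1 hd b.2.1)]
    have h := gcd_mul_cop d (n / d) b.1 b.2.2
    rwa [Nat.mul_div_cancel' hd] at h
  · intro x
    apply Subtype.ext; apply Subtype.ext
    show ((d * (x.1.1.val / d) : ℕ) : ZMod n) = x.1.1
    have hx : Nat.gcd (x.1.1.val) n = d := x.2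
    have hdvd : d ∣ x.1.1.val := by
      have := Nat.gcd_dvd_left x.1.1.val n
      rwa [hx] at this
    rw [Nat.mul_div_cancel' hdvd, ZMod.natCast_val, ZMod.cast_id]
  · intro b
    apply Subtype.ext
    show (((d * b.1 : ℕ) : ZMod n)).val / d = b.1
    rw [ZMod.val_natCast, Nat.mod_eq_of_lt (dmul_lt n d b.1 hd b.2.1),
      Nat.mul_div_cancel_left _ hd0]

/-- canonical vertex with gcd label `f`. -/
def cvert (n f : ℕ) (h1 : 1 < n) (hf : f ∣ n) (h2 : 1 < f) (h3 : f < n) : Zdv n :=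
  ⟨(f : ZMod n), mem_zdv n f f h1 hf h2 h3 dvd_rfl (by omega) h3⟩

lemma gv_cvert (n f : ℕ) (h1 : 1 < n) (hf : f ∣ n) (h2 : 1 < f) (h3 : f < n) :
    gv n (cvert n f h1 hf h2 h3) = f := by
  haveI : NeZero n := ⟨by omega⟩
  show Nat.gcd ((f : ZMod n)).val n = f
  rw [ZMod.val_natCast, Nat.mod_eq_of_lt h3, Nat.gcd_eq_left hf]

/-- second canonical vertex with gcd label `f`. -/
def cvert2 (n f : ℕ) (h1 : 1 < n) (hf : f ∣ n) (h2 : 1 < f) (h3 : f < n) : Zdv n :=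
  ⟨((n - f : ℕ) : ZMod n),
    mem_zdv n (n - f) f h1 hf h2 h3 (Nat.dvd_sub hf dvd_rfl) (by omega) (by omega)⟩

lemma gv_cvert2 (n f : ℕ) (h1 : 1 < n) (hf : f ∣ n) (h2 : 1 < f) (h3 : f < n) :
    gv n (cvert2 n f h1 hf h2 h3) = f := by
  haveI : NeZero n := ⟨by omega⟩
  show Nat.gcd (((n - f : ℕ) : ZMod n)).val n = f
  rw [ZMod.val_natCast, Nat.mod_eq_of_lt (by omega), gcd_sub_self n f hf (by omega)]

lemma cvert_ne_cvert2 (n f : ℕ) (h1 : 1 < n) (hf : f ∣ n) (h2 : 1 < f) (h3 : f < n)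
    (hf2 : 2 * f ≠ n) : cvert n f h1 hf h2 h3 ≠ cvert2 n f h1 hf h2 h3 := by
  haveI : NeZero n := ⟨by omega⟩
  intro h
  have hv : ((f : ZMod n)).val = (((n - f : ℕ) : ZMod n)).val := by
    rw [Subtype.ext_iff] at h
    exact congrArg ZMod.val h
  rw [ZMod.val_natCast, ZMod.val_natCast, Nat.mod_eq_of_lt h3, Nat.mod_eq_of_lt (by omega)] at hv
  omega

/-- quotient-level separation, asymmetric version -/
lemma qsep (n d e : ℕ) (h1 : 1 < n) (hd : d ∣ n) (hd2 : 1 < d) (hd3 : d < n)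
    (he : e ∣ n) (he2 : 1 < e) (he3 : e < n) (hde : ¬ d ∣ e) :
    ∃ f, f ∣ n ∧ 1 < f ∧ f < n ∧ ¬ (n ∣ d * f ↔ n ∣ e * f) ∧
      ((f ≠ d ∧ f ≠ e) ∨ 2 * f ≠ n) := by
  have hndpos : 0 < n / d := Nat.div_pos (by omega) (by omega)
  have hmd : d * (n / d) = n := Nat.mul_div_cancel' hd
  have hsep0 : n ∣ d * (n / d) := dvd_of_eq hmd.symm
  have hsep1 : ¬ n ∣ e * (n / d) := by
    intro hyp
    apply hde
    have h' : d * (n / d) ∣ e * (n / d) := by rw [hmd]; exact hyp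
    exact (Nat.mul_dvd_mul_iff_right hndpos).1 h'
  have hnd_dvd : n / d ∣ n := Nat.div_dvd_of_dvd hd
  have hnd1 : 1 < n / d := by
    rcases Nat.lt_or_ge 1 (n / d) with h | h
    · exact h
    · exfalso
      have : n / d = 1 ∨ n / d = 0 := by omega
      rcases this with h' | h' <;> rw [h'] at hmd <;> omega
  have hndn : n / d < n := Nat.div_lt_self (by omega) hd2
  by_cases hgood : (n / d ≠ d ∧ n / d ≠ e) ∨ 2 * (n / d) ≠ n
  · exact ⟨n / d, hnd_dvd, hnd1, hndn, fun hiff => hsep1 (hiff.1 hsep0), hgood⟩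
  · push_neg at hgood
    obtain ⟨hbad, h2f⟩ := hgood
    have hd2' : d = 2 := by
      have : d * (n / d) = 2 * (n / d) := by rw [hmd, h2f]
      exact Nat.eq_of_mul_eq_mul_right hndpos this
    rcases Classical.em (n / d = d) with hfd | hfd
    · exfalso
      have hn4 : n = 4 := by rw [← hmd, hfd, hd2']
      have he4 : e ∣ 4 := hn4 ▸ he
      have he3' : e < 4 := hn4 ▸ he3
      have he2' : e = 2 := by interval_cases e <;> omega
      exact hde (by rw [hd2', he2'])
    · have hfe : n / d = e := hbad hfd
      subst hd2'
      refine ⟨2, hd, by omega, by omega, ?_, Or.inr ?_⟩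
      · intro hiff
        have hne : n ∣ e * 2 := dvd_of_eq (by rw [← hfe, Nat.mul_comm]; exact hmd.symm)
        have hn4 : n ∣ 2 * 2 := hiff.2 hne
        have hle : n ≤ 4 := Nat.le_of_dvd (by norm_num) hn4
        have hn4' : n = 4 := by
          rcases (by omega : n = 3 ∨ n = 4) with h | h
          · exact absurd (h ▸ hn4) (by decide)
          · exact h
        apply hde
        rw [← hfe, hn4']
      · intro h4
        apply hde
        rw [← hfe, ← h4]

lemma adj_sep (n : ℕ) (h1 : 1 < n) (x y z : Zdv n) (hzx : z ≠ x) (hzy : z ≠ y)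
    (hsep : ¬ (n ∣ gv n x * gv n z ↔ n ∣ gv n y * gv n z)) :
    ¬ ((zdg n).Adj z x ↔ (zdg n).Adj z y) := by
  intro hiff
  apply hsep
  constructor
  · intro hdx
    have hadj : (zdg n).Adj z x := (adj_iff n h1 z x).2 ⟨hzx, by rwa [Nat.mul_comm] at hdx⟩
    have h2 := ((adj_iff n h1 z y).1 (hiff.1 hadj)).2
    rwa [Nat.mul_comm] at h2
  · intro hdy
    have hadj : (zdg n).Adj z y := (adj_iff n h1 z y).2 ⟨hzy, by rwa [Nat.mul_comm] at hdy⟩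
    have h2 := ((adj_iff n h1 z x).1 (hiff.2 hadj)).2
    rwa [Nat.mul_comm] at h2

lemma vsep (n : ℕ) (h1 : 1 < n) (x y : Zdv n) (hne : gv n x ≠ gv n y) :
    ∃ z : Zdv n, z ≠ x ∧ z ≠ y ∧ ¬ ((zdg n).Adj z x ↔ (zdg n).Adj z y) := by
  have hdx := gv_dvd n x
  have hdy := gv_dvd n y
  have h2x := gv_gt_one n h1 x
  have h2y := gv_gt_one n h1 y
  have h3x := gv_lt n h1 x
  have h3y := gv_lt n h1 y
  have key : ∃ f, f ∣ n ∧ 1 < f ∧ f < n ∧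
      ¬ (n ∣ gv n x * f ↔ n ∣ gv n y * f) ∧
      ((f ≠ gv n x ∧ f ≠ gv n y) ∨ 2 * f ≠ n) := by
    rcases Classical.em (gv n x ∣ gv n y) with h | h
    · have h' : ¬ gv n y ∣ gv n x := fun h2 => hne (Nat.dvd_antisymm h h2)
      obtain ⟨f, hf1, hf2, hf3, hf4, hf5⟩ := qsep n (gv n y) (gv n x) h1 hdy h2y h3y hdx h2x h3x h'
      exact ⟨f, hf1, hf2, hf3, fun hiff => hf4 hiff.symm, by tauto⟩
    · exact qsep n (gv n x) (gv n y) h1 hdx h2x h3x hdy h2y h3y h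
  obtain ⟨f, hf1, hf2, hf3, hf4, hf5⟩ := key
  rcases hf5 with ⟨hfd, hfe⟩ | hf2n
  · refine ⟨cvert n f h1 hf1 hf2 hf3, ?_, ?_, ?_⟩
    · intro h
      exact hfd (by rw [← gv_cvert n f h1 hf1 hf2 hf3, h])
    · intro h
      exact hfe (by rw [← gv_cvert n f h1 hf1 hf2 hf3, h])
    · refine adj_sep n h1 x y _ ?_ ?_ ?_
      · intro h; exact hfd (by rw [← gv_cvert n f h1 hf1 hf2 hf3, h])
      · intro h; exact hfe (by rw [← gv_cvert n f h1 hf1 hf2 hf3, h])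
      · rwa [gv_cvert]
  · have hzz := cvert_ne_cvert2 n f h1 hf1 hf2 hf3 hf2n
    rcases Classical.em (cvert n f h1 hf1 hf2 hf3 = x) with hx1 | hx1
    · -- use cvert2 : it differs from x (= cvert) and from y (gv y = gv x = f impossible... )
      have hgx : gv n x = f := by rw [← hx1, gv_cvert]
      refine ⟨cvert2 n f h1 hf1 hf2 hf3, fun h => hzz (hx1.trans h.symm), ?_, ?_⟩
      · intro h
        exact hne (by rw [hgx, ← gv_cvert2 n f h1 hf1 hf2 hf3, h])
      · refine adj_sep n h1 x y _ (fun h => hzz (hx1.trans h.symm)) ?_ ?_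
        · intro h; exact hne (by rw [hgx, ← gv_cvert2 n f h1 hf1 hf2 hf3, h])
        · rwa [gv_cvert2]
    · rcases Classical.em (cvert n f h1 hf1 hf2 hf3 = y) with hy1 | hy1
      · have hgy : gv n y = f := by rw [← hy1, gv_cvert]
        refine ⟨cvert2 n f h1 hf1 hf2 hf3, ?_, fun h => hzz (hy1.trans h.symm), ?_⟩
        · intro h
          exact hne (by rw [hgy, ← gv_cvert2 n f h1 hf1 hf2 hf3, h])
        · refine adj_sep n h1 x y _ ?_ (fun h => hzz (hy1.trans h.symm)) ?_
          · intro h; exact hne (by rw [hgy, ← gv_cvert2 n f h1 hf1 hf2 hf3, h])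
          · rwa [gv_cvert2]
      · refine ⟨cvert n f h1 hf1 hf2 hf3, hx1, hy1, ?_⟩
        refine adj_sep n h1 x y _ hx1 hy1 ?_
        rwa [gv_cvert]

/-- cancellation lemma: `n ∣ d * w ↔ n/d ∣ w` for `d ∣ n`. -/
lemma dvd_mul_iff_div_dvd (n d w : ℕ) (hd : d ∣ n) (hd0 : 0 < d) :
    n ∣ d * w ↔ (n / d) ∣ w := by
  have hmd : d * (n / d) = n := Nat.mul_div_cancel' hd
  constructor
  · intro h
    have h' : d * (n / d) ∣ d * w := by rw [hmd]; exact h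
    exact (Nat.mul_dvd_mul_iff_left hd0).1 h'
  · intro h
    have h' : d * (n / d) ∣ d * w := Nat.mul_dvd_mul_left d h
    rwa [hmd] at h'

/-- option trick -/
def optEquiv {α : Type*} [DecidableEq α] (p : α → Prop) (x : α) (hx : p x) :
    {z // p z} ≃ Option {z // p z ∧ z ≠ x} where
  toFun z := if h : z.1 = x then none else some ⟨z.1, z.2, h⟩
  invFun o := o.elim ⟨x, hx⟩ (fun w => ⟨w.1, w.2.1⟩)
  left_inv z := by
    by_cases h : z.1 = x
    · simp only [h, dif_pos]
      exact Subtype.ext h.symm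
    · simp only [h, dif_neg, not_false_iff, Option.elim]
  right_inv o := by
    rcases o with _ | w
    · simp only [Option.elim, dif_pos]
      exact dif_pos rfl
    · simp only [Option.elim]
      exact dif_neg w.2.2

/-- cardinality of the set `S_d` of vertices whose label is a multiple of `n/d`. -/
lemma sd_card (n d : ℕ) (h1 : 1 < n) (hd : d ∣ n) (hd2 : 1 < d) (hd3 : d < n) :
    Nat.card {z : Zdv n // (n / d) ∣ gv n z} = d - 1 := by
  haveI : NeZero n := ⟨by omega⟩
  set m := n / d with hm
  have hmd : m * d = n := Nat.div_mul_cancel hd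
  have hm2 : 1 < m := by
    rcases Nat.lt_or_ge 1 m with h | h
    · exact h
    · interval_cases m <;> omega
  have hm3 : m < n := by
    by_contra h
    push_neg at h
    nlinarith
  have hmdvd : m ∣ n := Nat.div_dvd_of_dvd hd
  have e1 : {z : Zdv n // m ∣ gv n z} ≃ {b : ℕ // 0 < b ∧ b < d} := by
    refine
    { toFun := fun z => ⟨z.1.1.val / m, ?_, ?_⟩
      invFun := fun b => ⟨⟨((m * b.1 : ℕ) : ZMod n), ?_⟩, ?_⟩
      left_inv := ?_
      right_inv := ?_ }
    · -- 0 < val / m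
      have hdvdval : m ∣ z.1.1.val := z.2.trans (Nat.gcd_dvd_left _ _)
      have hval0 : z.1.1.val ≠ 0 := fun hv => z.1.2.1 ((ZMod.val_eq_zero _).1 hv)
      rcases hdvdval with ⟨c, hc⟩
      rw [hc, Nat.mul_div_cancel_left _ (by omega)]
      rcases Nat.eq_zero_or_pos c with h | h
      · exfalso; rw [h, Nat.mul_zero] at hc; exact hval0 hc
      · exact h
    · -- val / m < d
      have hdvdval : m ∣ z.1.1.val := z.2.trans (Nat.gcd_dvd_left _ _)
      have hlt : z.1.1.val < n := ZMod.val_lt _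
      rcases hdvdval with ⟨c, hc⟩
      rw [hc, Nat.mul_div_cancel_left _ (by omega)]
      by_contra hcon
      push_neg at hcon
      have : m * d ≤ m * c := Nat.mul_le_mul_left m hcon
      omega
    · -- membership in Zdv
      have hlt : m * b.1 < n := by
        have h := Nat.mul_le_mul_left m (show b.1 + 1 ≤ d from b.2.2)
        rw [Nat.mul_add, Nat.mul_one] at h
        omega
      exact mem_zdv n (m * b.1) m h1 hmdvd hm2 hm3 ⟨b.1, rfl⟩
        (Nat.mul_pos (by omega) b.2.1) hlt
    · -- m ∣ gv
      have hlt : m * b.1 < n := by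
        have h := Nat.mul_le_mul_left m (show b.1 + 1 ≤ d from b.2.2)
        rw [Nat.mul_add, Nat.mul_one] at h
        omega
      show m ∣ Nat.gcd (((m * b.1 : ℕ) : ZMod n)).val n
      rw [ZMod.val_natCast, Nat.mod_eq_of_lt hlt]
      exact Nat.dvd_gcd ⟨b.1, rfl⟩ hmdvd
    · intro z
      apply Subtype.ext; apply Subtype.ext
      show ((m * (z.1.1.val / m) : ℕ) : ZMod n) = z.1.1
      have hdvdval : m ∣ z.1.1.val := z.2.trans (Nat.gcd_dvd_left _ _)
      rw [Nat.mul_div_cancel' hdvdval, ZMod.natCast_val, ZMod.cast_id]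
    · intro b
      apply Subtype.ext
      show (((m * b.1 : ℕ) : ZMod n)).val / m = b.1
      have hlt : m * b.1 < n := by
        have h := Nat.mul_le_mul_left m (show b.1 + 1 ≤ d from b.2.2)
        rw [Nat.mul_add, Nat.mul_one] at h
        omega
      rw [ZMod.val_natCast, Nat.mod_eq_of_lt hlt, Nat.mul_div_cancel_left _ (by omega)]
  have e2 : {b : ℕ // 0 < b ∧ b < d} ≃ Fin (d - 1) :=
    { toFun := fun b => ⟨b.1 - 1, by omega⟩
      invFun := fun i => ⟨i.1 + 1, by omega⟩
      left_inv := fun b => by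
        apply Subtype.ext
        have := b.2.1
        simp
        omega
      right_inv := fun i => by
        apply Fin.ext
        simp }
  rw [Nat.card_congr (e1.trans e2), Nat.card_eq_fintype_card, Fintype.card_fin]

/-- degree formula -/
lemma deg_eq (n : ℕ) (h1 : 1 < n) (x : Zdv n) :
    Nat.card {z : Zdv n // (zdg n).Adj x z}
      = gv n x - 1 - (if n ∣ gv n x * gv n x then 1 else 0) := by
  haveI : NeZero n := ⟨by omega⟩
  classical
  set d := gv n x with hdx
  have hd := gv_dvd n x
  have hd2 := gv_gt_one n h1 x
  have hd3 := gv_lt n h1 x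
  have hadj : ∀ z : Zdv n, (zdg n).Adj x z ↔ (z ≠ x ∧ (n / d) ∣ gv n z) := by
    intro z
    rw [adj_iff n h1 x z, dvd_mul_iff_div_dvd n d (gv n z) hd (by omega)]
    constructor
    · rintro ⟨h, h'⟩; exact ⟨Ne.symm h, h'⟩
    · rintro ⟨h, h'⟩; exact ⟨Ne.symm h, h'⟩
  by_cases hloop : n ∣ d * d
  · -- x itself satisfies the predicate
    have hx : (n / d) ∣ gv n x := (dvd_mul_iff_div_dvd n d d hd (by omega)).1 hloop
    have e0 : {z : Zdv n // (zdg n).Adj x z} ≃ {z : Zdv n // (n / d) ∣ gv n z ∧ z ≠ x} :=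
      Equiv.subtypeEquivRight (fun z => by rw [hadj z]; tauto)
    have hcard := sd_card n d h1 hd hd2 hd3
    rw [Nat.card_congr (optEquiv (fun z : Zdv n => (n / d) ∣ gv n z) x hx)] at hcard
    haveI : Fintype {z : Zdv n // (n / d) ∣ gv n z ∧ z ≠ x} := Fintype.ofFinite _
    rw [Nat.card_eq_fintype_card, Fintype.card_option, ← Nat.card_eq_fintype_card] at hcard
    have hcard' : Nat.card {z : Zdv n // (n / d) ∣ gv n z ∧ z ≠ x} + 1 = d - 1 := hcard
    rw [Nat.card_congr e0, if_pos hloop]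
    omega
  · have hx : ¬ (n / d) ∣ gv n x := fun h => hloop ((dvd_mul_iff_div_dvd n d d hd (by omega)).2 h)
    have e0 : {z : Zdv n // (zdg n).Adj x z} ≃ {z : Zdv n // (n / d) ∣ gv n z} := by
      refine Equiv.subtypeEquivRight (fun z => ?_)
      rw [hadj z]
      constructor
      · rintro ⟨h, h'⟩; exact h'
      · intro h'
        refine ⟨fun hz => hx ?_, h'⟩
        rwa [← hz]
    rw [Nat.card_congr e0, sd_card n d h1 hd hd2 hd3, if_neg hloop]
    omega

/-- "has an adjacent twin" predicate -/
def Tw (n : ℕ) (x : Zdv n) : Prop :=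
  ∃ y, y ≠ x ∧ (zdg n).Adj x y ∧ ∀ z, z ≠ x → z ≠ y → ((zdg n).Adj z x ↔ (zdg n).Adj z y)

lemma same_gv_nbhd (n : ℕ) (h1 : 1 < n) (x y z : Zdv n) (hg : gv n x = gv n y)
    (hzx : z ≠ x) (hzy : z ≠ y) : ((zdg n).Adj z x ↔ (zdg n).Adj z y) := by
  rw [adj_iff n h1 z x, adj_iff n h1 z y, hg]
  tauto

lemma Tw_iff (n : ℕ) (h1 : 1 < n) (x : Zdv n) :
    Tw n x ↔ (2 * gv n x ≠ n ∧ n ∣ gv n x * gv n x) := by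
  haveI : NeZero n := ⟨by omega⟩
  constructor
  · rintro ⟨y, hyx, hadj, hall⟩
    have hgy : gv n y = gv n x := by
      by_contra hne
      obtain ⟨z, hz1, hz2, hz3⟩ := vsep n h1 y x hne
      exact hz3 (Iff.symm (hall z hz2 hz1))
    have hloop : n ∣ gv n x * gv n x := by
      have := ((adj_iff n h1 x y).1 hadj).2
      rwa [hgy] at this
    refine ⟨?_, hloop⟩
    intro h2
    -- then both x and y have val = n/2, contradiction with x ≠ y
    have hval : ∀ w : Zdv n, gv n w = gv n x → w.1.val = gv n x := by
      intro w hw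
      have hdvd : gv n x ∣ w.1.val := hw ▸ Nat.gcd_dvd_left _ _
      have hlt : w.1.val < n := ZMod.val_lt _
      have hne0 : w.1.val ≠ 0 := fun hv => w.2.1 ((ZMod.val_eq_zero _).1 hv)
      rcases hdvd with ⟨c, hc⟩
      have hc2 : c < 2 := by
        by_contra hcon
        push_neg at hcon
        have := Nat.mul_le_mul_left (gv n x) hcon
        omega
      interval_cases c <;> omega
    have hx := hval x rfl
    have hy := hval y hgy
    exact hyx (Subtype.ext ((ZMod.val_injective n) (hy.trans hx.symm)))
  · rintro ⟨h2, hloop⟩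
    have hd := gv_dvd n x
    have hd2 := gv_gt_one n h1 x
    have hd3 := gv_lt n h1 x
    have hne := cvert_ne_cvert2 n (gv n x) h1 hd hd2 hd3 h2
    have hg1 := gv_cvert n (gv n x) h1 hd hd2 hd3
    have hg2 := gv_cvert2 n (gv n x) h1 hd hd2 hd3
    rcases Classical.em (cvert n (gv n x) h1 hd hd2 hd3 = x) with hcx | hcx
    · refine ⟨cvert2 n (gv n x) h1 hd hd2 hd3, fun h => hne (hcx.trans h.symm), ?_, ?_⟩
      · refine (adj_iff n h1 _ _).2 ⟨fun h => hne (hcx.trans h), ?_⟩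
        rw [hg2]; exact hloop
      · intro z hz1 hz2
        exact same_gv_nbhd n h1 x _ z (by rw [hg2]) hz1 hz2
    · refine ⟨cvert n (gv n x) h1 hd hd2 hd3, hcx, ?_, ?_⟩
      · refine (adj_iff n h1 _ _).2 ⟨fun h => hcx h.symm, ?_⟩
        rw [hg1]; exact hloop
      · intro z hz1 hz2
        exact same_gv_nbhd n h1 x _ z (by rw [hg1]) hz1 hz2

lemma Tw_iso (n : ℕ) (φ : zdg n ≃g zdg n) (x : Zdv n) (h : Tw n x) : Tw n (φ x) := by
  obtain ⟨y, hyx, hadj, hall⟩ := h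
  refine ⟨φ y, fun h => hyx (φ.toEquiv.injective h), φ.map_adj_iff.2 hadj, ?_⟩
  intro z hz1 hz2
  have e1 : z = φ (φ.symm z) := (φ.apply_symm_apply z).symm
  have h1' : φ.symm z ≠ x := fun h => hz1 (by rw [e1, h])
  have h2' : φ.symm z ≠ y := fun h => hz2 (by rw [e1, h])
  have := hall (φ.symm z) h1' h2'
  constructor
  · intro ha
    rw [e1] at ha ⊢
    exact φ.map_adj_iff.2 (this.1 (φ.map_adj_iff.1 ha))
  · intro ha
    rw [e1] at ha ⊢
    exact φ.map_adj_iff.2 (this.2 (φ.map_adj_iff.1 ha))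

lemma deg_iso (n : ℕ) (φ : zdg n ≃g zdg n) (x : Zdv n) :
    Nat.card {z : Zdv n // (zdg n).Adj (φ x) z} = Nat.card {z : Zdv n // (zdg n).Adj x z} :=
  (Nat.card_congr (Equiv.subtypeEquiv φ.toEquiv (fun z => φ.map_adj_iff.symm))).symm

lemma gv_det_arith (n d e : ℕ) (hd : d ∣ n) (hd2 : 1 < d) (hd3 : d < n)
    (he : e ∣ n) (he2 : 1 < e) (he3 : e < n)
    (hdeg : d - 1 - (if n ∣ d * d then 1 else 0) = e - 1 - (if n ∣ e * e then 1 else 0))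
    (hT : (2 * d ≠ n ∧ n ∣ d * d) ↔ (2 * e ≠ n ∧ n ∣ e * e)) : d = e := by
  have key : ∀ a b : ℕ, a ∣ n → 1 < a → a < n → b ∣ n → 1 < b → b < n →
      n ∣ a * a → ¬ n ∣ b * b → a - 2 = b - 1 → 2 * a = n → False := by
    intro a b ha ha2 ha3 hb hb2 hb3 hla hlb hdeq h2a
    have hab : a = b + 1 := by omega
    have hbdvd : b ∣ 2 * a := h2a ▸ hb
    have hb2' : b ∣ 2 * b := ⟨2, Nat.mul_comm 2 b⟩
    have hbd2 : b ∣ 2 := by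
      have := Nat.dvd_sub hbdvd hb2'
      rwa [show 2 * a - 2 * b = 2 from by omega] at this
    have hble : b ≤ 2 := Nat.le_of_dvd (by omega) hbd2
    have hb2'' : b = 2 := by omega
    have ha3' : a = 3 := by omega
    have hn6 : n = 6 := by omega
    rw [hn6, ha3'] at hla
    exact absurd hla (by decide)
  by_cases hld : n ∣ d * d <;> by_cases hle : n ∣ e * e
  · rw [if_pos hld, if_pos hle] at hdeg; omega
  · rw [if_pos hld, if_neg hle] at hdeg
    have h2d : 2 * d = n := by
      by_contra h
      exact hle (hT.1 ⟨h, hld⟩).2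
    exact absurd (key d e hd hd2 hd3 he he2 he3 hld hle (by omega) h2d) (fun h => h)
  · rw [if_neg hld, if_pos hle] at hdeg
    have h2e : 2 * e = n := by
      by_contra h
      exact hld (hT.2 ⟨h, hle⟩).2
    exact absurd (key e d he he2 he3 hd hd2 hd3 hle hld (by omega) h2e) (fun h => h)
  · rw [if_neg hld, if_neg hle] at hdeg; omega

/-- automorphisms preserve the gcd label -/
lemma gv_aut (n : ℕ) (h1 : 1 < n) (φ : zdg n ≃g zdg n) (x : Zdv n) :
    gv n (φ x) = gv n x := by
  refine gv_det_arith n (gv n (φ x)) (gv n x) (gv_dvd n _) (gv_gt_one n h1 _) (gv_lt n h1 _)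
    (gv_dvd n _) (gv_gt_one n h1 _) (gv_lt n h1 _) ?_ ?_
  · rw [← deg_eq n h1 (φ x), ← deg_eq n h1 x, deg_iso n φ x]
  · rw [← Tw_iff n h1 (φ x), ← Tw_iff n h1 x]
    constructor
    · intro h
      have := Tw_iso n φ.symm (φ x) h
      rwa [φ.symm_apply_apply] at this
    · exact Tw_iso n φ x

/-- `Equiv.permCongr` as a `MulEquiv`. -/
def permCongrMul {α β : Type*} (e : α ≃ β) : Equiv.Perm α ≃* Equiv.Perm β :=
  { Equiv.permCongr e with
    map_mul' := fun f g => by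
      ext b
      simp [Equiv.permCongr_apply] }

section main
variable (n : ℕ) (h1 : 1 < n)

/-- the label of a vertex as an element of the divisor index type. -/
def dOf (x : Zdv n) : {d : ℕ // d ∣ n ∧ 1 < d ∧ d < n} :=
  ⟨gv n x, gv_dvd n x, gv_gt_one n h1 x, gv_lt n h1 x⟩

abbrev Fiber (d : {d : ℕ // d ∣ n ∧ 1 < d ∧ d < n}) := {x : Zdv n // gv n x = d.1}

/-- glued map from a family of fiber permutations -/
def glue (σ : ∀ d, Equiv.Perm (Fiber n d)) (x : Zdv n) : Zdv n :=
  (σ (dOf n h1 x) ⟨x, rfl⟩).1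

lemma glue_spec (σ : ∀ d, Equiv.Perm (Fiber n d)) (d) (x : Zdv n) (hx : gv n x = d.1) :
    glue n h1 σ x = (σ d ⟨x, hx⟩).1 := by
  rcases d with ⟨dv, hd⟩
  dsimp at hx
  subst hx
  rfl

lemma gv_glue (σ : ∀ d, Equiv.Perm (Fiber n d)) (x : Zdv n) :
    gv n (glue n h1 σ x) = gv n x :=
  (σ (dOf n h1 x) ⟨x, rfl⟩).2

lemma glue_inv (σ : ∀ d, Equiv.Perm (Fiber n d)) (x : Zdv n) :
    glue n h1 σ⁻¹ (glue n h1 σ x) = x := by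
  rw [glue_spec n h1 σ⁻¹ (dOf n h1 x) (glue n h1 σ x) (gv_glue n h1 σ x)]
  have h2 : (⟨glue n h1 σ x, gv_glue n h1 σ x⟩ : Fiber n (dOf n h1 x))
      = σ (dOf n h1 x) ⟨x, rfl⟩ := Subtype.ext rfl
  rw [h2, Pi.inv_apply, ← Equiv.Perm.mul_apply, inv_mul_cancel, Equiv.Perm.one_apply]

/-- glued map as an equiv -/
def glueEquiv (σ : ∀ d, Equiv.Perm (Fiber n d)) : Equiv.Perm (Zdv n) where
  toFun := glue n h1 σ
  invFun := glue n h1 σ⁻¹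
  left_inv := glue_inv n h1 σ
  right_inv := fun x => by
    have := glue_inv n h1 σ⁻¹ x
    rwa [inv_inv] at this

/-- glued map as a graph automorphism -/
def glueAut (σ : ∀ d, Equiv.Perm (Fiber n d)) : zdg n ≃g zdg n where
  toEquiv := glueEquiv n h1 σ
  map_rel_iff' := by
    intro x y
    show (zdg n).Adj (glue n h1 σ x) (glue n h1 σ y) ↔ (zdg n).Adj x y
    rw [adj_iff n h1, adj_iff n h1, gv_glue, gv_glue]
    constructor
    · rintro ⟨hne, hd⟩
      refine ⟨fun h => hne (by rw [h]), hd⟩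
    · rintro ⟨hne, hd⟩
      refine ⟨fun h => hne ((glueEquiv n h1 σ).injective h), hd⟩

/-- restriction of an automorphism to a fiber -/
def permOf (φ : zdg n ≃g zdg n) (d : {d : ℕ // d ∣ n ∧ 1 < d ∧ d < n}) :
    Equiv.Perm (Fiber n d) where
  toFun x := ⟨φ x.1, by rw [gv_aut n h1 φ x.1]; exact x.2⟩
  invFun x := ⟨φ.symm x.1, by rw [gv_aut n h1 φ.symm x.1]; exact x.2⟩
  left_inv x := Subtype.ext (φ.symm_apply_apply x.1)
  right_inv x := Subtype.ext (φ.apply_symm_apply x.1)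

/-- the main group isomorphism onto the product of fiber permutation groups -/
def mainEquiv : (zdg n ≃g zdg n) ≃* ∀ d : {d : ℕ // d ∣ n ∧ 1 < d ∧ d < n},
    Equiv.Perm (Fiber n d) where
  toFun φ := permOf n h1 φ
  invFun σ := glueAut n h1 σ
  left_inv φ := by
    apply RelIso.ext
    intro x
    rfl
  right_inv σ := by
    funext d
    apply Equiv.ext
    intro x
    apply Subtype.ext
    show glue n h1 σ x.1 = (σ d x).1
    rw [glue_spec n h1 σ d x.1 x.2]
  map_mul' φ ψ := by
    funext d
    apply Equiv.ext
    intro x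
    apply Subtype.ext
    rfl

end main

theorem aut_zdg_zmod (n : ℕ) (h1 : 1 < n) (hn : ¬ n.Prime) :
    Nonempty ((zdg n ≃g zdg n) ≃*
      ∀ d : {d : ℕ // d ∣ n ∧ 1 < d ∧ d < n}, Equiv.Perm (Fin (Nat.totient (n / d.1)))) := by
  refine ⟨(mainEquiv n h1).trans (MulEquiv.piCongrRight (fun d => ?_))⟩
  exact permCongrMul (fiberEquiv n d.1 h1 d.2.1 d.2.2.1 d.2.2.2)
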